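/- With the notation of the determinant lemma (k, ℓ ≥ 2 with k+ℓ odd, 0 < x_1 < … < x_k, 0 < y_1 < … < y_ℓ, and D_{k,ℓ}(τ) the (k+ℓ)×(k+ℓ) determinant with rows (1,…,1,0,…,0), (x_1τ,…,x_kτ,0,…,0), (0,…,0,1,…,1), (0,…,0,y_1,…,y_ℓ), and (x_1^pτ^p,…,x_k^pτ^p,y_1^p,…,y_ℓ^p) for p = 2,…,k+ℓ−3), one has lim_{τ→0⁺} D_{k,ℓ}(τ)/τ^{k(k−1)/2} = VD(x) · GVD(y; μ), where VD(x) = ∏_{1≤i<j≤k}(x_j − x_i) is the Vandermonde determinant of (x_1,…,x_k), and GVD(y; μ) = det( y_j^{μ_i} )_{1≤i,j≤ℓ} is the generalized Vandermonde determinant with exponent vector μ = (0, 1, k, k+1, …, k+ℓ−3); in particular this limit is strictly positive. -/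

import Mathlib

open Set Pointwise

noncomputable section

/-- Euclidean `d`-space `E^d`, modeled as `Fin d → ℝ`. -/
abbrev Euc (d : ℕ) : Type := Fin d → ℝ

/-- The (affine) dimension of a subset of Euclidean space: the dimension of its affine hull. -/
def setDim {d : ℕ} (F : Set (Euc d)) : ℕ :=
  Module.finrank ℝ (affineSpan ℝ F).direction

/-- A (convex) polytope: the convex hull of a finite point set. -/
def IsPolytope {d : ℕ} (P : Set (Euc d)) : Prop :=
  ∃ S : Set (Euc d), S.Finite ∧ P = convexHull ℝ S

/-- `F` is a proper (nonempty) face of `P`: `F` is an exposed face of `P` (the intersection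
of `P` with a supporting hyperplane) which is nonempty and different from `P` itself. -/
def IsProperFaceOf {d : ℕ} (P F : Set (Euc d)) : Prop :=
  IsExposed ℝ P F ∧ F ≠ P ∧ F.Nonempty

/-- The vertex set of a polytope: its set of extreme points. -/
def vertSet {d : ℕ} (P : Set (Euc d)) : Set (Euc d) :=
  Set.extremePoints ℝ P

/-- The number of vertices of a polytope. -/
def vertCount {d : ℕ} (P : Set (Euc d)) : ℕ := (vertSet P).ncard

/-- `faceCount P k` is `f_k(P)`, the number of `k`-dimensional (proper) faces of `P`. -/
def faceCount {d : ℕ} (P : Set (Euc d)) (k : ℕ) : ℕ :=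
  {F : Set (Euc d) | IsProperFaceOf P F ∧ setDim F = k}.ncard

/-- The moment curve `t ↦ (t, t², …, t^δ)` in `E^δ`. -/
def momentCurve (δ : ℕ) (t : ℝ) : Euc δ := fun i => t ^ ((i : ℕ) + 1)

/-- A standard realization of the cyclic `δ`-polytope `C_δ(n)` with `n` vertices:
the convex hull of `n` distinct points on the moment curve. -/
def cyclicPolytope (δ n : ℕ) : Set (Euc δ) :=
  convexHull ℝ (momentCurve δ '' (Set.range fun j : Fin n => (j : ℝ) + 1))

/-- `S` is the vertex set of a proper face of `P` of dimension `|S| - 1`. -/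
def IsSimplexFaceVertexSet {d : ℕ} (P S : Set (Euc d)) : Prop :=
  ∃ F : Set (Euc d), IsProperFaceOf P F ∧ vertSet F = S ∧ setDim F + 1 = S.ncard

/-- A polytope `P` is `(V1; k)`-bineighborly: `V1` is a nonempty proper subset of the vertex
set of `P`, and for all nonempty `S1 ⊆ V1` and `S2 ⊆ V ∖ V1` with `|S1| + |S2| ≤ k`,
the set `S1 ∪ S2` is the vertex set of a face of `P` of dimension `|S1| + |S2| - 1`. -/
def PolytopeBineighborly {d : ℕ} (P V1 : Set (Euc d)) (k : ℕ) : Prop :=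
  V1.Nonempty ∧ V1 ⊂ vertSet P ∧
    ∀ S1 S2 : Set (Euc d), S1.Nonempty → S2.Nonempty →
      S1 ⊆ V1 → S2 ⊆ vertSet P \ V1 → S1.ncard + S2.ncard ≤ k →
        IsSimplexFaceVertexSet P (S1 ∪ S2)

/-- A polytope is `k`-neighborly if every nonempty subset of at most `k` of its vertices is
the vertex set of a face. -/
def PolytopeNeighborly {d : ℕ} (P : Set (Euc d)) (k : ℕ) : Prop :=
  ∀ S : Set (Euc d), S ⊆ vertSet P → S.Nonempty → S.ncard ≤ k →
    ∃ F : Set (Euc d), IsProperFaceOf P F ∧ vertSet F = S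

/-- Embed `E^d` into the hyperplane `{x_{d+1} = c}` of `E^{d+1}`. -/
def lift {d : ℕ} (c : ℝ) (x : Euc d) : Euc (d + 1) := Fin.snoc x c

/-- The Cayley polytope `CH_{d+1}({P1, P2})` of `P1` embedded in `{x_{d+1} = 0}` and
`P2` embedded in `{x_{d+1} = 1}`. -/
def cayley {d : ℕ} (P1 P2 : Set (Euc d)) : Set (Euc (d + 1)) :=
  convexHull ℝ (lift 0 '' P1 ∪ lift 1 '' P2)

/-- `ubTerm n d k = binom (n - d - 2 + k) k` (equal to the true binomial for `n ≥ d + 1`). -/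
def ubTerm (n d k : ℕ) : ℕ := (n + k - (d + 2)).choose k

/-- The upper bound for `f_{k-1}(P1 ⊕ P2)`:
`f_k(C_{d+1}(n1+n2)) - ∑_{i=0}^{⌊(d+1)/2⌋} binom(d+1-i, k+1-i) (binom(n1-d-2+i, i) + binom(n2-d-2+i, i))`. -/
def minkBound (d n1 n2 k : ℕ) : ℤ :=
  (faceCount (cyclicPolytope (d + 1) (n1 + n2)) k : ℤ)
    - ∑ i ∈ Finset.range ((d + 1) / 2 + 1),
        (if i ≤ k + 1 then ((d + 1 - i).choose (k + 1 - i) : ℤ) else 0)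
          * ((ubTerm n1 d i : ℤ) + (ubTerm n2 d i : ℤ))

/-- A polytopal complex in `E^N`: a finite nonempty collection of polytopes containing `∅`,
closed under taking faces, such that pairwise intersections are faces of both. -/
structure PolyComplex (N : ℕ) where
  faces : Set (Set (Euc N))
  finite_faces : faces.Finite
  empty_mem : ∅ ∈ faces
  polytope_mem : ∀ F ∈ faces, IsPolytope F
  down_closed : ∀ F ∈ faces, ∀ G : Set (Euc N), IsExposed ℝ F G → G ∈ faces
  inter_face : ∀ F ∈ faces, ∀ G ∈ faces, IsExposed ℝ F (F ∩ G) ∧ IsExposed ℝ G (F ∩ G)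

namespace PolyComplex

/-- The vertex set of a complex: its `0`-dimensional faces. -/
def verts {N : ℕ} (C : PolyComplex N) : Set (Euc N) := {v : Euc N | {v} ∈ C.faces}

/-- `C` is a (pure-dimension-bounded) `d`-complex: all faces have dimension at most `d`
and some face has dimension exactly `d`. -/
def IsDComplex {N : ℕ} (C : PolyComplex N) (d : ℕ) : Prop :=
  (∀ F ∈ C.faces, setDim F ≤ d) ∧ ∃ F ∈ C.faces, setDim F = d

/-- A complex `C` is `(V1; k)`-bineighborly. -/
def Bineighborly {N : ℕ} (C : PolyComplex N) (V1 : Set (Euc N)) (k : ℕ) : Prop :=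
  V1.Nonempty ∧ V1 ⊂ C.verts ∧
    ∀ S1 S2 : Set (Euc N), S1.Nonempty → S2.Nonempty →
      S1 ⊆ V1 → S2 ⊆ C.verts \ V1 → S1.ncard + S2.ncard ≤ k →
        ∃ F ∈ C.faces, vertSet F = S1 ∪ S2 ∧ setDim F + 1 = S1.ncard + S2.ncard

/-- A complex is `k`-neighborly if every nonempty subset of at most `k` of its vertices is
the vertex set of a face. -/
def Neighborly {N : ℕ} (C : PolyComplex N) (k : ℕ) : Prop :=
  ∀ S : Set (Euc N), S ⊆ C.verts → S.Nonempty → S.ncard ≤ k →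
    ∃ F ∈ C.faces, vertSet F = S

end PolyComplex

/-- `F` is a simplex: the convex hull of an affinely independent finite point set. -/
def IsSimplexSet {d : ℕ} (F : Set (Euc d)) : Prop :=
  ∃ S : Finset (Euc d),
    AffineIndependent ℝ (fun v : {x // x ∈ S} => (v : Euc d)) ∧
      F = convexHull ℝ (S : Set (Euc d))

/-- A simplicial polytope: all its proper faces are simplices. -/
def IsSimplicialPolytope {d : ℕ} (P : Set (Euc d)) : Prop :=
  IsPolytope P ∧ ∀ F : Set (Euc d), IsProperFaceOf P F → IsSimplexSet F

/-- The collection `𝓕` of proper faces of the Cayley polytope of `P1`, `P2` having at least one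
vertex in (the embedded copy of) each of `P1` and `P2`. -/
def cayleyFaces {d : ℕ} (P1 P2 : Set (Euc d)) : Set (Set (Euc (d + 1))) :=
  {F : Set (Euc (d + 1)) | IsProperFaceOf (cayley P1 P2) F ∧
    (vertSet F ∩ lift 0 '' P1).Nonempty ∧ (vertSet F ∩ lift 1 '' P2).Nonempty}

/-- `fFm1 P1 P2 k = f_{k-1}(𝓕)`, with the convention `f_{-1}(𝓕) = -1`. -/
def fFm1 {d : ℕ} (P1 P2 : Set (Euc d)) : ℕ → ℤ
  | 0 => -1
  | (k + 1) => (({F ∈ cayleyFaces P1 P2 | setDim F = k} : Set (Set (Euc (d + 1)))).ncard : ℤ)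

/-- The `h`-vector of `𝓕`: `h_k(𝓕) = ∑_{i=0}^{k} (-1)^{k-i} binom(d+1-i, d+1-k) f_{i-1}(𝓕)`. -/
def hF {d : ℕ} (P1 P2 : Set (Euc d)) (k : ℕ) : ℤ :=
  ∑ i ∈ Finset.range (k + 1),
    (-1 : ℤ) ^ (k - i) * ((d + 1 - i).choose (d + 1 - k) : ℤ) * fFm1 P1 P2 i

/-- `fBdm1 P k = f_{k-1}(∂P)`, with `f_{-1}(∂P) = 1`. -/
def fBdm1 {d : ℕ} (P : Set (Euc d)) : ℕ → ℤ
  | 0 => 1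
  | (k + 1) => (faceCount P k : ℤ)

/-- The `h`-vector of the boundary complex of a `d`-polytope `P ⊆ E^d`:
`h_k(∂P) = ∑_{i=0}^{k} (-1)^{k-i} binom(d-i, d-k) f_{i-1}(∂P)`. -/
def hBd {d : ℕ} (P : Set (Euc d)) (k : ℕ) : ℤ :=
  ∑ i ∈ Finset.range (k + 1),
    (-1 : ℤ) ^ (k - i) * ((d - i).choose (d - k) : ℤ) * fBdm1 P i

/-- The `g`-vector of `∂P`: `g_0 = h_0 (= 1)` and `g_k = h_k - h_{k-1}`, with the
convention `h_{d+1}(∂P) = 0`. -/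
def gBd {d : ℕ} (P : Set (Euc d)) (k : ℕ) : ℤ :=
  (if k ≤ d then hBd P k else 0)
    - (if k = 0 then 0 else if k - 1 ≤ d then hBd P (k - 1) else 0)

/-- `fCycm1 δ n k = f_{k-1}(C_δ(n))`, with `f_{-1} = 1`. -/
def fCycm1 (δ n k : ℕ) : ℤ :=
  if k = 0 then 1 else (faceCount (cyclicPolytope δ n) (k - 1) : ℤ)

/-- The upper bound for `f_{k-1}(𝓕)`:
`f_{k-1}(C_{d+1}(n1+n2)) - ∑_{i=0}^{⌊(d+1)/2⌋} binom(d+1-i, k-i)(binom(n1-d-2+i,i)+binom(n2-d-2+i,i))`. -/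
def cayleyBound (d n1 n2 k : ℕ) : ℤ :=
  fCycm1 (d + 1) (n1 + n2) k
    - ∑ i ∈ Finset.range ((d + 1) / 2 + 1),
        (if i ≤ k then ((d + 1 - i).choose (k - i) : ℤ) else 0)
          * ((ubTerm n1 d i : ℤ) + (ubTerm n2 d i : ℤ))

/-- The moment-like curve `γ1(t; ζ) = (t, ζ t^d, t², t³, …, t^{d-1}, 0)` in `E^{d+1}`. -/
def gamma1 (d : ℕ) (ζ t : ℝ) : Euc (d + 1) := fun i =>
  if (i : ℕ) = 0 then t
  else if (i : ℕ) = 1 then ζ * t ^ d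
  else if (i : ℕ) = d then 0
  else t ^ (i : ℕ)

/-- The moment-like curve `γ2(s; ζ) = (ζ s^d, s, s², s³, …, s^{d-1}, 1)` in `E^{d+1}`. -/
def gamma2 (d : ℕ) (ζ s : ℝ) : Euc (d + 1) := fun i =>
  if (i : ℕ) = 0 then ζ * s ^ d
  else if (i : ℕ) = 1 then s
  else if (i : ℕ) = d then 1
  else s ^ (i : ℕ)

/-- The `(k+ℓ) × (k+ℓ)` matrix whose determinant is `D_{k,ℓ}(τ)`: rows are
`(1,…,1,0,…,0)`, `(x₁τ,…,x_kτ,0,…,0)`, `(0,…,0,1,…,1)`, `(0,…,0,y₁,…,y_ℓ)` and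
`(x₁^pτ^p,…,x_k^pτ^p,y₁^p,…,y_ℓ^p)` for `p = 2, …, k+ℓ-3`. -/
def Dmat (k l : ℕ) (x : Fin k → ℝ) (y : Fin l → ℝ) (τ : ℝ) :
    Matrix (Fin (k + l)) (Fin (k + l)) ℝ :=
  Matrix.of fun r c =>
    have hcl : (c : ℕ) < k + l := c.isLt
    if hc : (c : ℕ) < k then
      if (r : ℕ) = 0 then 1
      else if (r : ℕ) = 1 then x ⟨(c : ℕ), hc⟩ * τ
      else if (r : ℕ) = 2 then 0
      else if (r : ℕ) = 3 then 0
      else (x ⟨(c : ℕ), hc⟩ * τ) ^ ((r : ℕ) - 2)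
    else
      have hck : (c : ℕ) - k < l := by omega
      if (r : ℕ) = 0 then 0
      else if (r : ℕ) = 1 then 0
      else if (r : ℕ) = 2 then 1
      else if (r : ℕ) = 3 then y ⟨(c : ℕ) - k, hck⟩
      else y ⟨(c : ℕ) - k, hck⟩ ^ ((r : ℕ) - 2)

/-- The exponent vector `μ = (0, 1, k, k+1, …, k+ℓ-3)`. -/
def muExp (k i : ℕ) : ℕ := if i = 0 then 0 else if i = 1 then 1 else k + i - 2

/-- The Vandermonde determinant `VD(x) = ∏_{i<j} (x_j - x_i)`. -/
def VDprod {k : ℕ} (x : Fin k → ℝ) : ℝ :=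
  ∏ p ∈ Finset.univ.filter (fun p : Fin k × Fin k => p.1 < p.2), (x p.2 - x p.1)

/-- The generalized Vandermonde determinant `GVD(y; μ) = det (y_j^{μ_i})` with exponent
vector `μ = (0, 1, k, k+1, …, k+ℓ-3)`. -/
def GVDdet (k : ℕ) {l : ℕ} (y : Fin l → ℝ) : ℝ :=
  (Matrix.of fun i j : Fin l => y j ^ muExp k (i : ℕ)).det

/-- `binom(a, b)` for an integer lower index, zero when `b < 0` or `b > a`. -/
def zchoose (a : ℕ) (b : ℤ) : ℝ := if 0 ≤ b then (a.choose b.toNat : ℝ) else 0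



lemma fewnomial_zero : ∀ (n : ℕ) (c : Fin n → ℝ) (μ : Fin n → ℕ), StrictMono μ →
    ∀ (t : Fin n → ℝ), (∀ j, 0 < t j) → StrictMono t →
    (∀ j, ∑ i, c i * t j ^ μ i = 0) → ∀ i, c i = 0 := by
  intro n
  induction n with
  | zero => intro c μ _ t _ _ _ i; exact i.elim0
  | succ n ih =>
    intro c μ hμ t ht0 ht hroot
    -- the shifted function g
    set g : ℝ → ℝ := fun u => ∑ i : Fin (n+1), c i * u ^ (μ i - μ 0) with hg
    have hpow : ∀ (u : ℝ) (i : Fin (n+1)), 0 < u → u ^ μ i = u ^ μ 0 * u ^ (μ i - μ 0) := by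
      intro u i hu
      rw [← pow_add]
      congr 1
      have := hμ.monotone (Fin.zero_le i)
      omega
    have hgroot : ∀ j, g (t j) = 0 := by
      intro j
      have h0 : t j ^ μ 0 * g (t j) = 0 := by
        rw [hg]
        simp only []
        rw [Finset.mul_sum]
        rw [← hroot j]
        apply Finset.sum_congr rfl
        intro i _
        rw [hpow (t j) i (ht0 j)]
        ring
      have := pow_ne_zero (μ 0) (ne_of_gt (ht0 j))
      rcases mul_eq_zero.1 h0 with h | h
      · exact absurd h this
      · exact h
    -- derivative
    have hderiv : ∀ u : ℝ, HasDerivAt g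
        (∑ i : Fin (n+1), c i * ((μ i - μ 0 : ℕ) * u ^ (μ i - μ 0 - 1))) u := by
      intro u
      apply HasDerivAt.fun_sum
      intro i _
      exact (hasDerivAt_pow (μ i - μ 0) u).const_mul (c i)
    -- Rolle between consecutive roots
    have hroll : ∀ j : Fin n, ∃ s, s ∈ Set.Ioo (t j.castSucc) (t j.succ) ∧
        (∑ i : Fin (n+1), c i * ((μ i - μ 0 : ℕ) * s ^ (μ i - μ 0 - 1))) = 0 := by
      intro j
      have hlt : t j.castSucc < t j.succ := ht (Fin.castSucc_lt_succ : j.castSucc < j.succ)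
      obtain ⟨s, hs, hs0⟩ := exists_hasDerivAt_eq_zero hlt
        (Continuous.continuousOn (by
          apply continuous_finset_sum
          intro i _
          exact continuous_const.mul (continuous_pow (μ i - μ 0))))
        ((hgroot _).trans (hgroot _).symm)
        (fun x _ => hderiv x)
      exact ⟨s, hs, hs0⟩
    choose s hs hs0 using hroll
    have hs0' : ∀ j : Fin n, 0 < s j := fun j => lt_trans (ht0 j.castSucc) (hs j).1
    have hsmono : StrictMono s := by
      intro a b hab
      calc s a < t a.succ := (hs a).2
        _ ≤ t b.castSucc := ht.monotone (by
            have hab' : (a : ℕ) < (b : ℕ) := hab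
            rw [Fin.le_def]
            simp only [Fin.val_succ, Fin.coe_castSucc]
            omega)
        _ < s b := (hs b).1
    have hcsucc : ∀ i : Fin n, c i.succ = 0 := by
      have := ih (fun i : Fin n => c i.succ * (μ i.succ - μ 0 : ℕ))
        (fun i : Fin n => μ i.succ - μ 0 - 1)
        (by
          intro a b hab
          show μ a.succ - μ 0 - 1 < μ b.succ - μ 0 - 1
          have h1 : μ 0 < μ a.succ := hμ (Fin.succ_pos a)
          have h2 : μ a.succ < μ b.succ := hμ (by simpa using hab)
          omega)
        s hs0' hsmono
        (by
          intro j
          have := hs0 j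
          rw [← this]
          rw [Fin.sum_univ_succ]
          have hz : c 0 * ((μ 0 - μ 0 : ℕ) * s j ^ (μ 0 - μ 0 - 1)) = 0 := by simp
          rw [hz, zero_add]
          apply Finset.sum_congr rfl
          intro i _
          push_cast
          ring)
      intro i
      have h := this i
      have hne : ((μ i.succ - μ 0 : ℕ) : ℝ) ≠ 0 := by
        have : μ 0 < μ i.succ := hμ (Fin.succ_pos i)
        exact Nat.cast_ne_zero.2 (by omega)
      exact (mul_eq_zero.1 h).resolve_right hne
    have hc0 : c 0 = 0 := by
      have h := hroot 0
      rw [Fin.sum_univ_succ] at h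
      have : ∀ i : Fin n, c i.succ * t 0 ^ μ i.succ = 0 := by
        intro i; rw [hcsucc i, zero_mul]
      rw [Finset.sum_eq_zero (fun i _ => this i), add_zero] at h
      have := pow_ne_zero (μ 0) (ne_of_gt (ht0 0))
      exact (mul_eq_zero.1 h).resolve_right this
    intro i
    refine Fin.cases hc0 hcsucc i

lemma gvd_pos : ∀ (l : ℕ) (μ : Fin l → ℕ), StrictMono μ → ∀ (y : Fin l → ℝ),
    (∀ j, 0 < y j) → StrictMono y →
    0 < (Matrix.of fun i j : Fin l => y j ^ μ i).det := by
  intro l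
  induction l with
  | zero =>
    intro μ _ y _ _
    rw [Matrix.det_fin_zero]
    norm_num
  | succ l ih =>
    intro μ hμ y hy0 hy
    rcases Nat.eq_zero_or_pos l with rfl | hl
    · rw [Matrix.det_fin_one]
      exact pow_pos (hy0 0) _
    -- the matrix with last column replaced by powers of u
    set M : ℝ → Matrix (Fin (l+1)) (Fin (l+1)) ℝ :=
      fun u => Matrix.of fun i j => (Function.update y (Fin.last l) u) j ^ μ i with hM
    set c : Fin (l+1) → ℝ := fun i =>
      (-1 : ℝ) ^ ((i : ℕ) + (Fin.last l : ℕ)) *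
        (Matrix.of fun a b : Fin l => (y b.castSucc) ^ μ (i.succAbove a)).det with hc
    have hminor : ∀ (u : ℝ) (i : Fin (l+1)),
        (M u).submatrix i.succAbove (Fin.last l).succAbove
          = Matrix.of fun a b : Fin l => (y b.castSucc) ^ μ (i.succAbove a) := by
      intro u i
      ext a b
      simp only [Matrix.submatrix_apply, hM, Matrix.of_apply, Fin.succAbove_last]
      rw [Function.update_of_ne (Fin.castSucc_lt_last b).ne]
    have hf : ∀ u : ℝ, (M u).det = ∑ i, c i * u ^ μ i := by
      intro u
      rw [Matrix.det_succ_column (M u) (Fin.last l)]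
      apply Finset.sum_congr rfl
      intro i _
      rw [hminor u i]
      have : (M u) i (Fin.last l) = u ^ μ i := by
        simp [hM, Function.update_self]
      rw [this, hc]
      ring
    have hroots : ∀ j : Fin l, (M (y j.castSucc)).det = 0 := by
      intro j
      rw [← Matrix.det_transpose]
      apply Matrix.det_zero_of_row_eq (Fin.castSucc_lt_last j).ne
      funext i
      simp only [Matrix.transpose_apply, hM, Matrix.of_apply]
      rw [Function.update_of_ne (Fin.castSucc_lt_last j).ne, Function.update_self]
    have hclast : 0 < c (Fin.last l) := by
      have hpow1 : ((-1 : ℝ)) ^ ((Fin.last l : ℕ) + (Fin.last l : ℕ)) = 1 := by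
        rw [show ((Fin.last l : ℕ) + (Fin.last l : ℕ)) = 2 * l by simp [Fin.val_last]; omega, pow_mul]
        norm_num
      have hmat : (Matrix.of fun a b : Fin l => (y b.castSucc) ^ μ ((Fin.last l).succAbove a)).det
          = (Matrix.of fun a b : Fin l => (y b.castSucc) ^ μ (a.castSucc)).det := by
        congr 1; ext a b
        rw [Matrix.of_apply, Matrix.of_apply, Fin.succAbove_last]
      have hih := ih (fun a => μ a.castSucc)
        (fun a b hab => hμ (Fin.castSucc_lt_castSucc_iff.2 hab))
        (fun b => y b.castSucc) (fun b => hy0 _)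
        (fun a b hab => hy (Fin.castSucc_lt_castSucc_iff.2 hab))
      rw [hc]
      simp only []
      rw [hpow1, hmat, one_mul]
      exact hih
    -- the target
    have htarget : (Matrix.of fun i j : Fin (l+1) => y j ^ μ i).det = (M (y (Fin.last l))).det := by
      congr 1
      ext i j
      simp [hM, Function.update_eq_self]
    rw [htarget]
    by_contra hle
    push_neg at hle
    -- find a large point where f is positive
    set S : ℝ := ∑ i : Fin l, |c i.castSucc| with hS
    have hmulast : 1 ≤ μ (Fin.last l) := by
      have : μ 0 < μ (Fin.last l) := hμ (by simp [Fin.lt_def]; omega)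
      omega
    set u₀ : ℝ := max (y (Fin.last l) + 1) ((S + 1) / c (Fin.last l)) with hu₀
    have hu₀y : y (Fin.last l) < u₀ := lt_of_lt_of_le (by linarith) (le_max_left _ _)
    have hu₀1 : 1 ≤ u₀ := le_trans (by have := hy0 (Fin.last l); linarith) (le_max_left _ _)
    have hu₀S : S + 1 ≤ c (Fin.last l) * u₀ := by
      rw [← div_le_iff₀' hclast]
      exact le_max_right _ _
    have hfu₀ : 0 < (M u₀).det := by
      rw [hf]
      rw [Fin.sum_univ_castSucc]
      have hbound : ∀ i : Fin l, -( |c i.castSucc| * u₀ ^ (μ (Fin.last l) - 1)) ≤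
          c i.castSucc * u₀ ^ μ i.castSucc := by
        intro i
        have h1 : u₀ ^ μ i.castSucc ≤ u₀ ^ (μ (Fin.last l) - 1) := by
          apply pow_le_pow_right₀ hu₀1
          have : μ i.castSucc < μ (Fin.last l) := hμ (Fin.castSucc_lt_last i)
          omega
        have h2 : 0 < u₀ ^ μ i.castSucc := pow_pos (by linarith) _
        calc -( |c i.castSucc| * u₀ ^ (μ (Fin.last l) - 1))
            ≤ -( |c i.castSucc| * u₀ ^ μ i.castSucc) := by
              apply neg_le_neg
              exact mul_le_mul_of_nonneg_left h1 (abs_nonneg _)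
          _ ≤ c i.castSucc * u₀ ^ μ i.castSucc := by
              have h3 := mul_le_mul_of_nonneg_right (neg_abs_le (c i.castSucc)) (le_of_lt h2)
              rw [neg_mul] at h3
              exact h3
      have hsum : -(S * u₀ ^ (μ (Fin.last l) - 1)) ≤
          ∑ i : Fin l, c i.castSucc * u₀ ^ μ i.castSucc := by
        rw [hS, Finset.sum_mul, ← Finset.sum_neg_distrib]
        exact Finset.sum_le_sum fun i _ => hbound i
      have hlead : u₀ ^ μ (Fin.last l) = u₀ ^ (μ (Fin.last l) - 1) * u₀ := by
        rw [← pow_succ]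
        congr 1
        omega
      have hupos : 0 < u₀ ^ (μ (Fin.last l) - 1) := pow_pos (by linarith) _
      have : S * u₀ ^ (μ (Fin.last l) - 1) < c (Fin.last l) * u₀ ^ μ (Fin.last l) := by
        rw [hlead, ← mul_assoc]
        calc S * u₀ ^ (μ (Fin.last l) - 1) < (S+1) * u₀ ^ (μ (Fin.last l) - 1) := by nlinarith
          _ ≤ (c (Fin.last l) * u₀) * u₀ ^ (μ (Fin.last l) - 1) :=
              mul_le_mul_of_nonneg_right hu₀S (le_of_lt hupos)
          _ = c (Fin.last l) * u₀ ^ (μ (Fin.last l) - 1) * u₀ := by ring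
      have hSnn : 0 ≤ S := Finset.sum_nonneg fun i _ => abs_nonneg _
      nlinarith [hsum]
    -- find a root beyond y last, or use y last itself
    have hcont : ContinuousOn (fun u => (M u).det) (Set.Icc (y (Fin.last l)) u₀) := by
      apply Continuous.continuousOn
      have : (fun u => (M u).det) = fun u => ∑ i, c i * u ^ μ i := funext hf
      rw [this]
      exact continuous_finset_sum _ fun i _ => continuous_const.mul (continuous_pow _)
    have hallzero : c (Fin.last l) = 0 := by
      rcases lt_or_eq_of_le hle with hlt | heq
      · -- strict: IVT gives a root w in Ioo
        have h0mem : (0:ℝ) ∈ Set.Ioo ((M (y (Fin.last l))).det) ((M u₀).det) := ⟨hlt, hfu₀⟩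
        obtain ⟨w, hw, hwroot⟩ := intermediate_value_Ioo (le_of_lt hu₀y) hcont h0mem
        set t : Fin (l+1) → ℝ := Function.update y (Fin.last l) w with htdef
        have ht0 : ∀ j, 0 < t j := by
          intro j
          rcases eq_or_ne j (Fin.last l) with rfl | hne
          · rw [htdef, Function.update_self]; linarith [hw.1, hy0 (Fin.last l)]
          · rw [htdef, Function.update_of_ne hne]; exact hy0 j
        have htmono : StrictMono t := by
          intro a b hab
          have haln : a ≠ Fin.last l := by
            intro h; subst h
            exact absurd hab (not_lt.2 (Fin.le_last b))
          rcases eq_or_ne b (Fin.last l) with rfl | hbn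
          · rw [htdef, Function.update_self, Function.update_of_ne haln]
            calc y a ≤ y (Fin.last l) := hy.monotone (Fin.le_last a)
              _ < w := hw.1
          · rw [htdef, Function.update_of_ne haln, Function.update_of_ne hbn]
            exact hy hab
        have htroots : ∀ j, ∑ i, c i * t j ^ μ i = 0 := by
          intro j
          rw [← hf]
          rcases eq_or_ne j (Fin.last l) with rfl | hne
          · rw [htdef, Function.update_self]; exact hwroot
          · rw [htdef, Function.update_of_ne hne]
            obtain ⟨j', rfl⟩ := Fin.exists_castSucc_eq.2 hne
            exact hroots j'
        exact fewnomial_zero (l+1) c μ hμ t ht0 htmono htroots (Fin.last l)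
      · -- equality: y itself gives l+1 roots
        have htroots : ∀ j, ∑ i, c i * y j ^ μ i = 0 := by
          intro j
          rw [← hf]
          rcases eq_or_ne j (Fin.last l) with rfl | hne
          · exact heq
          · obtain ⟨j', rfl⟩ := Fin.exists_castSucc_eq.2 hne
            exact hroots j'
        exact fewnomial_zero (l+1) c μ hμ y hy0 hy htroots (Fin.last l)
    exact absurd hallzero (ne_of_gt hclast)

/-- rotate the block `{2, …, k+1}` by one -/
def rfunN (k i : ℕ) : ℕ :=
  if i < 2 then i else if i ≤ k then i + 1 else if i = k + 1 then 2 else i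

def rinvN (k i : ℕ) : ℕ :=
  if i < 2 then i else if i = 2 then k + 1 else if i ≤ k + 1 then i - 1 else i

lemma exists_rho (k l : ℕ) (hk : 2 ≤ k) (hl : 2 ≤ l) :
    ∃ ρ : Equiv.Perm (Fin (k + l)), Equiv.Perm.sign ρ = 1 ∧
      ∀ i : Fin (k + l), (ρ i : ℕ) =
        if (i : ℕ) < 2 then (i : ℕ) else if (i : ℕ) < k then (i : ℕ) + 2
        else if (i : ℕ) = k then 2 else if (i : ℕ) = k + 1 then 3 else (i : ℕ) := by
  have hbound : ∀ i : Fin (k + l), rfunN k (i : ℕ) < k + l := by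
    intro i; have := i.isLt; simp only [rfunN]; split_ifs <;> omega
  have hbound' : ∀ i : Fin (k + l), rinvN k (i : ℕ) < k + l := by
    intro i; have := i.isLt; simp only [rinvN]; split_ifs <;> omega
  set r : Equiv.Perm (Fin (k + l)) :=
    { toFun := fun i => ⟨rfunN k (i : ℕ), hbound i⟩
      invFun := fun i => ⟨rinvN k (i : ℕ), hbound' i⟩
      left_inv := by
        intro i
        ext
        simp only [rinvN, rfunN]
        split_ifs <;> omega
      right_inv := by
        intro i
        ext
        simp only [rinvN, rfunN]
        split_ifs <;> omega } with hr
  refine ⟨r.trans r, ?_, ?_⟩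
  · have : r.trans r = r * r := rfl
    rw [this, map_mul]
    exact Int.units_mul_self _
  · intro i
    have h1 : ((r.trans r) i : ℕ) = rfunN k (rfunN k (i : ℕ)) := rfl
    rw [h1]
    have := i.isLt
    simp only [rfunN]
    split_ifs <;> omega

def Amat (k : ℕ) (x : Fin k → ℝ) (τ : ℝ) : Matrix (Fin k) (Fin k) ℝ :=
  Matrix.of fun i c => (x c * τ) ^ (i : ℕ)

def Bmat (k l : ℕ) (y : Fin l → ℝ) : Matrix (Fin k) (Fin l) ℝ :=
  Matrix.of fun i c => if (i : ℕ) < 2 then (0 : ℝ) else y c ^ (i : ℕ)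

def Cmat (k l : ℕ) (x : Fin k → ℝ) (τ : ℝ) : Matrix (Fin l) (Fin k) ℝ :=
  Matrix.of fun j c => if (j : ℕ) < 2 then (0 : ℝ) else (x c * τ) ^ (k + (j : ℕ) - 2)

def Emat (k l : ℕ) (y : Fin l → ℝ) : Matrix (Fin l) (Fin l) ℝ :=
  Matrix.of fun j c => y c ^ muExp k (j : ℕ)

lemma vd_eq {k : ℕ} (x : Fin k → ℝ) :
    VDprod x = ∏ i : Fin k, ∏ j ∈ Finset.Ioi i, (x j - x i) := by
  rw [VDprod, Finset.prod_sigma']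
  refine Finset.prod_bij (fun p _ => (⟨p.1, p.2⟩ : Σ _ : Fin k, Fin k)) ?_ ?_ ?_ ?_
  · intro p hp
    simp only [Finset.mem_sigma, Finset.mem_univ, Finset.mem_Ioi, true_and]
    exact (Finset.mem_filter.1 hp).2
  · intro a _ b _ hab
    obtain ⟨h1, h2⟩ := Sigma.mk.inj_iff.1 hab
    exact Prod.ext h1 (by simpa using h2)
  · intro q hq
    refine ⟨(q.1, q.2), ?_, rfl⟩
    simp only [Finset.mem_filter, Finset.mem_univ, true_and]
    have := (Finset.mem_sigma.1 hq).2
    simpa using this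
  · intro p hp; rfl

lemma sum_card_Ioi (k : ℕ) : ∑ i : Fin k, (Finset.Ioi i).card = k * (k - 1) / 2 := by
  have h1 : ∀ i : Fin k, (Finset.Ioi i).card = k - 1 - (i : ℕ) := fun i => Fin.card_Ioi (a := i)
  calc ∑ i : Fin k, (Finset.Ioi i).card = ∑ i : Fin k, (k - 1 - (i : ℕ)) :=
        Finset.sum_congr rfl fun i _ => h1 i
    _ = ∑ i ∈ Finset.range k, (k - 1 - i) := Fin.sum_univ_eq_sum_range _ _
    _ = ∑ i ∈ Finset.range k, i := by
        rcases Nat.eq_zero_or_pos k with rfl | hk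
        · simp
        · rw [← Finset.sum_range_reflect]
          apply Finset.sum_congr rfl
          intro i hi
          have := Finset.mem_range.1 hi
          omega
    _ = k * (k - 1) / 2 := Finset.sum_range_id k

lemma det_Amat (k : ℕ) (x : Fin k → ℝ) (τ : ℝ) :
    (Amat k x τ).det = τ ^ (k * (k - 1) / 2) * VDprod x := by
  have h1 : Amat k x τ = Matrix.transpose (Matrix.vandermonde fun c => x c * τ) := by
    ext i c; rfl
  rw [h1, Matrix.det_transpose, Matrix.det_vandermonde]
  have h2 : ∀ i j : Fin k, x j * τ - x i * τ = (x j - x i) * τ := fun i j => by ring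
  calc (∏ i : Fin k, ∏ j ∈ Finset.Ioi i, (x j * τ - x i * τ))
      = ∏ i : Fin k, ∏ j ∈ Finset.Ioi i, ((x j - x i) * τ) := by
        exact Finset.prod_congr rfl fun i _ => Finset.prod_congr rfl fun j _ => h2 i j
    _ = ∏ i : Fin k, ((∏ j ∈ Finset.Ioi i, (x j - x i)) * τ ^ (Finset.Ioi i).card) := by
        exact Finset.prod_congr rfl fun i _ => by
          rw [Finset.prod_mul_distrib, Finset.prod_const]
    _ = (∏ i : Fin k, ∏ j ∈ Finset.Ioi i, (x j - x i)) *
          ∏ i : Fin k, τ ^ (Finset.Ioi i).card := Finset.prod_mul_distrib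
    _ = τ ^ (k * (k - 1) / 2) * VDprod x := by
        rw [Finset.prod_pow_eq_pow_sum, sum_card_Ioi, ← vd_eq, mul_comm]


lemma finsum_inl {k l : ℕ} (c : Fin (k + l)) (hc : (c : ℕ) < k) :
    finSumFinEquiv.symm c = Sum.inl ⟨(c : ℕ), hc⟩ := by
  have h := finSumFinEquiv_symm_apply_castAdd (n := l) (⟨(c : ℕ), hc⟩ : Fin k)
  have hc' : c = Fin.castAdd l ⟨(c : ℕ), hc⟩ := Fin.ext rfl
  exact (congrArg finSumFinEquiv.symm hc').trans h

lemma finsum_inr {k l : ℕ} (c : Fin (k + l)) (hc : k ≤ (c : ℕ)) :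
    finSumFinEquiv.symm c = Sum.inr ⟨(c : ℕ) - k, by omega⟩ := by
  have h := finSumFinEquiv_symm_apply_natAdd (m := k) (⟨(c : ℕ) - k, by omega⟩ : Fin l)
  have hc' : c = Fin.natAdd k ⟨(c : ℕ) - k, by omega⟩ := Fin.ext (by
    simp only [Fin.natAdd_mk]
    omega)
  exact (congrArg finSumFinEquiv.symm hc').trans h

lemma block_entry (k l : ℕ) (hk : 2 ≤ k) (hl : 2 ≤ l) (x : Fin k → ℝ) (y : Fin l → ℝ)
    (τ : ℝ) (ρ : Equiv.Perm (Fin (k + l)))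
    (hρ : ∀ i : Fin (k + l), (ρ i : ℕ) =
      if (i : ℕ) < 2 then (i : ℕ) else if (i : ℕ) < k then (i : ℕ) + 2
      else if (i : ℕ) = k then 2 else if (i : ℕ) = k + 1 then 3 else (i : ℕ)) :
    ∀ i j : Fin (k + l), Dmat k l x y τ (ρ i) j =
      Matrix.fromBlocks (Amat k x τ) (Bmat k l y) (Cmat k l x τ) (Emat k l y)
        (finSumFinEquiv.symm i) (finSumFinEquiv.symm j) := by
  intro i j
  have hvi := hρ i
  rcases Nat.lt_or_ge ((j : ℕ)) k with hj | hj
  · rw [finsum_inl j hj]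
    have hDj : Dmat k l x y τ (ρ i) j =
        (if ((ρ i : ℕ)) = 0 then 1
         else if ((ρ i : ℕ)) = 1 then x ⟨(j : ℕ), hj⟩ * τ
         else if ((ρ i : ℕ)) = 2 then 0
         else if ((ρ i : ℕ)) = 3 then 0
         else (x ⟨(j : ℕ), hj⟩ * τ) ^ ((ρ i : ℕ) - 2)) := by
      simp only [Dmat, Matrix.of_apply]
      rw [dif_pos hj]
    rw [hDj]
    rcases Nat.lt_or_ge ((i : ℕ)) k with hi | hi
    · rw [finsum_inl i hi, Matrix.fromBlocks_apply₁₁]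
      simp only [Amat, Matrix.of_apply]
      rcases Nat.lt_or_ge ((i : ℕ)) 2 with h2 | h2
      · have hv : (ρ i : ℕ) = (i : ℕ) := by rw [hvi, if_pos h2]
        have : (i : ℕ) = 0 ∨ (i : ℕ) = 1 := by omega
        rcases this with h0 | h0 <;> rw [hv, h0] <;> norm_num
      · have hv : (ρ i : ℕ) = (i : ℕ) + 2 := by
          rw [hvi, if_neg (by omega), if_pos hi]
        simp [hv, Nat.add_sub_cancel, show (i:ℕ)+2 ≠ 0 by omega, show (i:ℕ)+2 ≠ 1 by omega,
          show (i:ℕ)+2 ≠ 2 by omega, show (i:ℕ)+2 ≠ 3 by omega, show (i:ℕ) ≠ 0 by omega]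
    · rw [finsum_inr i hi, Matrix.fromBlocks_apply₂₁]
      simp only [Cmat, Matrix.of_apply]
      rcases Nat.lt_or_ge ((i : ℕ)) (k + 2) with h2 | h2
      · have : (i : ℕ) = k ∨ (i : ℕ) = k + 1 := by omega
        rcases this with h0 | h0
        · have hv : (ρ i : ℕ) = 2 := by
            rw [hvi, if_neg (by omega), if_neg (by omega), if_pos h0]
          rw [hv, if_neg (by omega), if_neg (by omega), if_pos rfl,
            if_pos (by show (i : ℕ) - k < 2; omega)]
        · have hv : (ρ i : ℕ) = 3 := by
            rw [hvi, if_neg (by omega), if_neg (by omega), if_neg (by omega), if_pos h0]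
          rw [hv, if_neg (by omega), if_neg (by omega), if_neg (by omega), if_pos rfl,
            if_pos (by show (i : ℕ) - k < 2; omega)]
      · have hv : (ρ i : ℕ) = (i : ℕ) := by
          rw [hvi, if_neg (by omega), if_neg (by omega), if_neg (by omega), if_neg (by omega)]
        rw [hv, if_neg (by omega), if_neg (by omega), if_neg (by omega), if_neg (by omega),
          if_neg (by show ¬ ((i : ℕ) - k < 2); omega)]
        congr 1
        show (i : ℕ) - 2 = k + ((i : ℕ) - k) - 2
        omega
  · rw [finsum_inr j hj]
    have hDj : Dmat k l x y τ (ρ i) j =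
        (if ((ρ i : ℕ)) = 0 then 0
         else if ((ρ i : ℕ)) = 1 then 0
         else if ((ρ i : ℕ)) = 2 then 1
         else if ((ρ i : ℕ)) = 3 then y ⟨(j : ℕ) - k, by omega⟩
         else y ⟨(j : ℕ) - k, by omega⟩ ^ ((ρ i : ℕ) - 2)) := by
      simp only [Dmat, Matrix.of_apply]
      rw [dif_neg (by omega)]
    rw [hDj]
    rcases Nat.lt_or_ge ((i : ℕ)) k with hi | hi
    · rw [finsum_inl i hi, Matrix.fromBlocks_apply₁₂]
      simp only [Bmat, Matrix.of_apply]
      rcases Nat.lt_or_ge ((i : ℕ)) 2 with h2 | h2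
      · have hv : (ρ i : ℕ) = (i : ℕ) := by rw [hvi, if_pos h2]
        have : (i : ℕ) = 0 ∨ (i : ℕ) = 1 := by omega
        rcases this with h0 | h0 <;> rw [hv, h0] <;> simp
      · have hv : (ρ i : ℕ) = (i : ℕ) + 2 := by
          rw [hvi, if_neg (by omega), if_pos hi]
        simp [hv, Nat.add_sub_cancel, show ¬((i:ℕ) < 2) by omega, show (i:ℕ)+2 ≠ 0 by omega,
          show (i:ℕ)+2 ≠ 1 by omega, show (i:ℕ)+2 ≠ 2 by omega, show (i:ℕ)+2 ≠ 3 by omega, show (i:ℕ) ≠ 0 by omega]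
    · rw [finsum_inr i hi, Matrix.fromBlocks_apply₂₂]
      simp only [Emat, Matrix.of_apply]
      rcases Nat.lt_or_ge ((i : ℕ)) (k + 2) with h2 | h2
      · have : (i : ℕ) = k ∨ (i : ℕ) = k + 1 := by omega
        rcases this with h0 | h0
        · have hv : (ρ i : ℕ) = 2 := by
            rw [hvi, if_neg (by omega), if_neg (by omega), if_pos h0]
          rw [hv, if_neg (by omega), if_neg (by omega), if_pos rfl]
          have : muExp k (((⟨(i : ℕ) - k, by omega⟩ : Fin l)) : ℕ) = 0 := by
            simp only [muExp]
            rw [if_pos (by show (i : ℕ) - k = 0; omega)]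
          rw [this, pow_zero]
        · have hv : (ρ i : ℕ) = 3 := by
            rw [hvi, if_neg (by omega), if_neg (by omega), if_neg (by omega), if_pos h0]
          rw [hv, if_neg (by omega), if_neg (by omega), if_neg (by omega), if_pos rfl]
          have : muExp k (((⟨(i : ℕ) - k, by omega⟩ : Fin l)) : ℕ) = 1 := by
            simp only [muExp]
            rw [if_neg (by show ¬ ((i : ℕ) - k = 0); omega),
              if_pos (by show (i : ℕ) - k = 1; omega)]
          rw [this, pow_one]
      · have hv : (ρ i : ℕ) = (i : ℕ) := by
          rw [hvi, if_neg (by omega), if_neg (by omega), if_neg (by omega), if_neg (by omega)]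
        rw [hv, if_neg (by omega), if_neg (by omega), if_neg (by omega), if_neg (by omega)]
        have : muExp k (((⟨(i : ℕ) - k, by omega⟩ : Fin l)) : ℕ) = (i : ℕ) - 2 := by
          simp only [muExp]
          rw [if_neg (by show ¬ ((i : ℕ) - k = 0); omega),
            if_neg (by show ¬ ((i : ℕ) - k = 1); omega)]
          show k + ((i : ℕ) - k) - 2 = (i : ℕ) - 2
          omega
        rw [this]

def Vmat (k : ℕ) (x : Fin k → ℝ) : Matrix (Fin k) (Fin k) ℝ :=
  Matrix.of fun i c => x c ^ (i : ℕ)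

def Wmat (k l : ℕ) (x : Fin k → ℝ) : Matrix (Fin l) (Fin k) ℝ :=
  Matrix.of fun j c => x c ^ (k + (j : ℕ) - 2)

lemma CAB_entry (k l : ℕ) (hk : 2 ≤ k) (x : Fin k → ℝ) (y : Fin l → ℝ)
    (hx : StrictMono x) (τ : ℝ) (hτ : τ ≠ 0) (j : Fin l) (c : Fin l) :
    (Cmat k l x τ * (Amat k x τ)⁻¹ * Bmat k l y) j c
      = if (j : ℕ) < 2 then 0
        else ∑ i : Fin k, ((Wmat k l x * (Vmat k x)⁻¹) j i * Bmat k l y i c)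
          * τ ^ (k + (j : ℕ) - 2 - (i : ℕ)) := by
  have hAfact : Amat k x τ = Matrix.diagonal (fun i : Fin k => τ ^ (i : ℕ)) * Vmat k x := by
    ext i c
    rw [Matrix.diagonal_mul]
    show (x c * τ) ^ (i : ℕ) = τ ^ (i : ℕ) * x c ^ (i : ℕ)
    rw [mul_pow]; ring
  have hCfact : Cmat k l x τ =
      Matrix.diagonal (fun j : Fin l => if (j : ℕ) < 2 then (0:ℝ) else τ ^ (k + (j : ℕ) - 2))
        * Wmat k l x := by
    ext j c
    rw [Matrix.diagonal_mul]
    show (if (j : ℕ) < 2 then (0:ℝ) else (x c * τ) ^ (k + (j : ℕ) - 2))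
      = (if (j : ℕ) < 2 then (0:ℝ) else τ ^ (k + (j : ℕ) - 2)) * x c ^ (k + (j : ℕ) - 2)
    split_ifs
    · rw [zero_mul]
    · rw [mul_pow]; ring
  have hAinv : (Amat k x τ)⁻¹ =
      (Vmat k x)⁻¹ * Matrix.diagonal (fun i : Fin k => (τ ^ (i : ℕ))⁻¹) := by
    rw [hAfact, Matrix.mul_inv_rev]
    congr 1
    apply Matrix.inv_eq_right_inv
    rw [Matrix.diagonal_mul_diagonal]
    have h1 : (fun i : Fin k => τ ^ (i:ℕ) * (τ ^ (i:ℕ))⁻¹) = fun _ => (1:ℝ) :=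
      funext fun i => mul_inv_cancel₀ (pow_ne_zero _ hτ)
    rw [h1, Matrix.diagonal_one]
  rw [hAinv, hCfact]
  have hassoc : Matrix.diagonal (fun j : Fin l => if (j : ℕ) < 2 then (0:ℝ) else τ ^ (k + (j : ℕ) - 2))
        * Wmat k l x * ((Vmat k x)⁻¹ * Matrix.diagonal (fun i : Fin k => (τ ^ (i : ℕ))⁻¹))
        * Bmat k l y
      = Matrix.diagonal (fun j : Fin l => if (j : ℕ) < 2 then (0:ℝ) else τ ^ (k + (j : ℕ) - 2))
        * ((Wmat k l x * (Vmat k x)⁻¹) *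
            (Matrix.diagonal (fun i : Fin k => (τ ^ (i : ℕ))⁻¹) * Bmat k l y)) := by
    simp only [Matrix.mul_assoc]
  rw [hassoc, Matrix.diagonal_mul]
  split_ifs with hj
  · rw [zero_mul]
  · rw [Matrix.mul_apply, Finset.mul_sum]
    apply Finset.sum_congr rfl
    intro i _
    rw [Matrix.diagonal_mul]
    have hle : (i : ℕ) ≤ k + (j : ℕ) - 2 := by
      have := i.isLt
      omega
    rw [pow_sub₀ τ hτ hle]
    ring


lemma tendsto_CAB (k l : ℕ) (hk : 2 ≤ k) (x : Fin k → ℝ) (y : Fin l → ℝ)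
    (hx : StrictMono x) :
    Filter.Tendsto (fun τ : ℝ => Cmat k l x τ * (Amat k x τ)⁻¹ * Bmat k l y)
      (nhdsWithin 0 (Set.Ioi 0)) (nhds 0) := by
  apply tendsto_pi_nhds.2
  intro j
  apply tendsto_pi_nhds.2
  intro c
  have h00 : ((0 : Matrix (Fin l) (Fin l) ℝ) j) c = (0:ℝ) := rfl
  rw [h00]
  set g : ℝ → ℝ := fun τ => if (j : ℕ) < 2 then 0
    else ∑ i : Fin k, ((Wmat k l x * (Vmat k x)⁻¹) j i * Bmat k l y i c)
      * τ ^ (k + (j : ℕ) - 2 - (i : ℕ)) with hgdef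
  have hgc : Continuous g := by
    by_cases hj : (j : ℕ) < 2
    · have : g = fun _ => 0 := funext fun τ => if_pos hj
      rw [this]; exact continuous_const
    · have : g = fun τ => ∑ i : Fin k, ((Wmat k l x * (Vmat k x)⁻¹) j i * Bmat k l y i c)
          * τ ^ (k + (j : ℕ) - 2 - (i : ℕ)) := funext fun τ => if_neg hj
      rw [this]
      exact continuous_finset_sum _ fun i _ => continuous_const.mul (continuous_pow _)
  have hg0 : g 0 = 0 := by
    rw [hgdef]
    simp only []
    split_ifs with hj
    · rfl
    · apply Finset.sum_eq_zero
      intro i _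
      have hexp : k + (j : ℕ) - 2 - (i : ℕ) ≠ 0 := by
        have := i.isLt
        omega
      rw [zero_pow hexp, mul_zero]
  have hgt : Filter.Tendsto g (nhdsWithin 0 (Set.Ioi 0)) (nhds 0) := by
    have := hgc.tendsto 0
    rw [hg0] at this
    exact this.mono_left nhdsWithin_le_nhds
  apply Filter.Tendsto.congr' _ hgt
  apply Filter.eventuallyEq_of_mem self_mem_nhdsWithin
  intro τ hτ
  exact (CAB_entry k l hk x y hx τ (ne_of_gt hτ) j c).symm

lemma det_Dmat_eq (k l : ℕ) (hk : 2 ≤ k) (hl : 2 ≤ l) (x : Fin k → ℝ) (y : Fin l → ℝ) (τ : ℝ)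
    (ρ : Equiv.Perm (Fin (k + l))) (hsign : Equiv.Perm.sign ρ = 1)
    (hρ : ∀ i : Fin (k + l), (ρ i : ℕ) =
      if (i : ℕ) < 2 then (i : ℕ) else if (i : ℕ) < k then (i : ℕ) + 2
      else if (i : ℕ) = k then 2 else if (i : ℕ) = k + 1 then 3 else (i : ℕ)) :
    (Dmat k l x y τ).det
      = (Matrix.fromBlocks (Amat k x τ) (Bmat k l y) (Cmat k l x τ) (Emat k l y)).det := by
  have h1 : (Dmat k l x y τ).submatrix ρ id
      = (Matrix.fromBlocks (Amat k x τ) (Bmat k l y) (Cmat k l x τ) (Emat k l y)).submatrix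
          finSumFinEquiv.symm finSumFinEquiv.symm := by
    ext i jj
    rw [Matrix.submatrix_apply, Matrix.submatrix_apply, id_eq]
    exact block_entry k l hk hl x y τ ρ hρ i jj
  have h2 := Matrix.det_permute ρ (Dmat k l x y τ)
  rw [h1, Matrix.det_submatrix_equiv_self, hsign] at h2
  simpa using h2.symm


/-- as `τ → 0⁺`, `D_{k,ℓ}(τ) / τ^{k(k-1)/2} → VD(x) · GVD(y; μ)` with
`μ = (0, 1, k, k+1, …, k+ℓ-3)`, and this limit is strictly positive. -/
theorem statement_17 (k l : ℕ) (hk : 2 ≤ k) (hl : 2 ≤ l) (hodd : Odd (k + l))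
    (x : Fin k → ℝ) (y : Fin l → ℝ)
    (hx0 : ∀ i, 0 < x i) (hx : StrictMono x)
    (hy0 : ∀ j, 0 < y j) (hy : StrictMono y) :
    Filter.Tendsto (fun τ : ℝ => (Dmat k l x y τ).det / τ ^ (k * (k - 1) / 2))
        (nhdsWithin 0 (Set.Ioi 0)) (nhds (VDprod x * GVDdet k y))
      ∧ 0 < VDprod x * GVDdet k y := by
  obtain ⟨ρ, hsign, hρ⟩ := exists_rho k l hk hl
  have hVD : 0 < VDprod x := by
    apply Finset.prod_pos
    intro p hp
    exact sub_pos.2 (hx (Finset.mem_filter.1 hp).2)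
  have hGVD : 0 < GVDdet k y := by
    have hmu : StrictMono (fun i : Fin l => muExp k (i : ℕ)) := by
      intro a b hab
      have hab' : (a : ℕ) < (b : ℕ) := hab
      show muExp k (a : ℕ) < muExp k (b : ℕ)
      simp only [muExp]
      split_ifs <;> omega
    exact gvd_pos l _ hmu y hy0 hy
  refine ⟨?_, mul_pos hVD hGVD⟩
  have hdetE : (Emat k l y).det = GVDdet k y := rfl
  have hmain : ∀ τ : ℝ, 0 < τ → (Dmat k l x y τ).det / τ ^ (k * (k - 1) / 2)
      = VDprod x * (Emat k l y - Cmat k l x τ * (Amat k x τ)⁻¹ * Bmat k l y).det := by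
    intro τ hτ
    have hdetA : (Amat k x τ).det = τ ^ (k * (k - 1) / 2) * VDprod x := det_Amat k x τ
    have hAunit : IsUnit (Amat k x τ).det := by
      rw [hdetA]
      exact isUnit_iff_ne_zero.2 (by positivity)
    have hInv : Invertible (Amat k x τ) := (Amat k x τ).invertibleOfIsUnitDet hAunit
    rw [det_Dmat_eq k l hk hl x y τ ρ hsign hρ, Matrix.det_fromBlocks₁₁,
      Matrix.invOf_eq_nonsing_inv, hdetA]
    have hτN : τ ^ (k * (k - 1) / 2) ≠ 0 := pow_ne_zero _ (ne_of_gt hτ)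
    field_simp
  have hev : (fun τ : ℝ => (Dmat k l x y τ).det / τ ^ (k * (k - 1) / 2))
      =ᶠ[nhdsWithin 0 (Set.Ioi 0)]
      (fun τ => VDprod x * (Emat k l y - Cmat k l x τ * (Amat k x τ)⁻¹ * Bmat k l y).det) :=
    Filter.eventuallyEq_of_mem self_mem_nhdsWithin fun τ hτ => hmain τ hτ
  have hCAB := tendsto_CAB k l hk x y hx
  have hsub : Filter.Tendsto
      (fun τ => Emat k l y - Cmat k l x τ * (Amat k x τ)⁻¹ * Bmat k l y)
      (nhdsWithin 0 (Set.Ioi 0)) (nhds (Emat k l y)) := by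
    have h := Filter.Tendsto.sub (tendsto_const_nhds (x := Emat k l y)) hCAB
    rw [sub_zero] at h
    exact h
  have hdetc : Continuous fun M : Matrix (Fin l) (Fin l) ℝ => M.det :=
    Continuous.matrix_det continuous_id
  have hdet := (hdetc.tendsto (Emat k l y)).comp hsub
  have hfin := hdet.const_mul (VDprod x)
  rw [hdetE] at hfin
  exact Filter.Tendsto.congr' hev.symm hfin
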